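/- Let 𝓕_N(ψ) = (∑_{i=1}^N w(X_i) ψ(X_i)) / (∑_{i=1}^N w(X_i)) be the self-normalized importance-sampling estimator (defined to be 0 when the denominator vanishes). There exists a constant c > 0 depending only on the weight bound C and the bound M on |ψ| (in particular independent of N, λ, μ and ψ) such that for every N ≥ 1, E[(𝓕_N(ψ) − μ(ψ))²] ≤ c/N. (The quantitative bound Eq. (B.2) used in the proof of Theorem 1; its independence of the proposal gives the uniformity over previous-particle configurations required by the induction.) -/

import Mathlib

open MeasureTheory ProbabilityTheory Filter
open scoped NNReal ENNReal

/-- **Quantitative bound Eq. (B.2):** there is a constant `c > 0` depending only on the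
weight bound `C` and the bound `M` on `|ψ|` (independent of `N`, `λ`, `μ` and `ψ`) such
that the MSE of the self-normalized importance-sampling estimator is at most `c / N`. -/
theorem selfNormalizedIS_MSE_bound (C M : ℝ) (hC : 0 < C) (hM : 0 ≤ M) :
    ∃ c : ℝ, 0 < c ∧
      ∀ (𝒳 : Type) (_ : MeasurableSpace 𝒳)
        (lam mu : Measure 𝒳), IsProbabilityMeasure lam → IsProbabilityMeasure mu →
        ∀ (w : 𝒳 → ℝ), Measurable w → (∀ x, 0 ≤ w x) →
        mu = lam.withDensity (fun x => ENNReal.ofReal (w x)) →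
        (∀ᵐ x ∂lam, w x ≤ C) →
        ∀ (ψ : 𝒳 → ℝ), Measurable ψ → (∀ x, |ψ x| ≤ M) →
        ∀ (Ω : Type) (_ : MeasurableSpace Ω)
          (P : Measure Ω), IsProbabilityMeasure P →
        ∀ (X : ℕ → Ω → 𝒳), (∀ i, Measurable (X i)) →
          (∀ i, P.map (X i) = lam) →
          iIndepFun X P →
        ∀ N : ℕ, 1 ≤ N →
          ∫ ω, ((∑ i ∈ Finset.range N, w (X i ω) * ψ (X i ω)) /
                  (∑ i ∈ Finset.range N, w (X i ω)) - ∫ x, ψ x ∂mu) ^ 2 ∂P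
            ≤ c / N := by
  refine ⟨32 * C * M ^ 2 + 1, by positivity, ?_⟩
  intro 𝒳 m𝒳 lam mu hlam hmu w hw hw0 hmuw hwC ψ hψ hψM Ω mΩ P hP X hX hmap hindep N hN
  haveI := hlam; haveI := hmu; haveI := hP
  have hN0 : (0:ℝ) < N := by exact_mod_cast hN
  -- transfer of integrals from P to lam
  have htrans : ∀ (g : 𝒳 → ℝ), Measurable g → ∀ i : ℕ,
      ∫ ω, g (X i ω) ∂P = ∫ x, g x ∂lam := by
    intro g hg i
    rw [← hmap i, integral_map (hX i).aemeasurable hg.aestronglyMeasurable]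
  have haeC : ∀ i : ℕ, ∀ᵐ ω ∂P, w (X i ω) ≤ C := by
    intro i
    exact ae_of_ae_map (hX i).aemeasurable (by rw [hmap i]; exact hwC)
  -- integrals against mu are integrals against w·lam
  have key : ∀ f : 𝒳 → ℝ, ∫ x, f x ∂mu = ∫ x, w x * f x ∂lam := by
    intro f
    rw [hmuw]
    have h1 : (fun x => ENNReal.ofReal (w x)) =
        fun x => (((fun x => (w x).toNNReal) x : ℝ≥0) : ℝ≥0∞) := rfl
    rw [h1, integral_withDensity_eq_integral_smul (hw.real_toNNReal) f]
    congr 1; funext x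
    simp [NNReal.smul_def, Real.coe_toNNReal _ (hw0 x)]
  have hw1 : ∫ x, w x ∂lam = 1 := by
    have := key (fun _ => 1)
    simpa using this.symm
  set μψ : ℝ := ∫ x, ψ x ∂mu with hμψdef
  have hμψ : |μψ| ≤ M := by
    have := norm_integral_le_of_norm_le_const
      (C := M) (μ := mu) (f := ψ) (Eventually.of_forall fun x => by simpa using hψM x)
    simpa using this
  -- the centered weight function
  set g : 𝒳 → ℝ := fun x => w x * (ψ x - μψ) with hgdef
  have hg : Measurable g := hw.mul (hψ.sub measurable_const)
  have hgbd : ∀ x, w x ≤ C → |g x| ≤ 2 * M * C := by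
    intro x hxC
    have h1 : |ψ x - μψ| ≤ 2 * M := by
      calc |ψ x - μψ| ≤ |ψ x| + |μψ| := abs_sub _ _
        _ ≤ M + M := add_le_add (hψM x) hμψ
        _ = 2 * M := by ring
    calc |g x| = w x * |ψ x - μψ| := by
          simp only [hgdef]; rw [abs_mul, abs_of_nonneg (hw0 x)]
      _ ≤ C * (2 * M) := mul_le_mul hxC h1 (abs_nonneg _) hC.le
      _ = 2 * M * C := by ring
  -- integrability facts on lam
  have hwint : Integrable w lam := by
    refine memLp_one_iff_integrable.mp (MemLp.of_bound hw.aestronglyMeasurable C ?_)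
    filter_upwards [hwC] with x hx
    rw [Real.norm_eq_abs, abs_of_nonneg (hw0 x)]; exact hx
  have hwψint : Integrable (fun x => w x * ψ x) lam := by
    refine memLp_one_iff_integrable.mp
      (MemLp.of_bound (hw.mul hψ).aestronglyMeasurable (C * M) ?_)
    filter_upwards [hwC] with x hx
    rw [Real.norm_eq_abs, abs_mul, abs_of_nonneg (hw0 x)]
    exact mul_le_mul hx (hψM x) (abs_nonneg _) hC.le
  have hg0 : ∫ x, g x ∂lam = 0 := by
    have h2 : ∫ x, g x ∂lam = ∫ x, w x * ψ x ∂lam - (∫ x, w x ∂lam) * μψ := by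
      simp only [hgdef]
      simp_rw [mul_sub]
      rw [integral_sub hwψint (hwint.mul_const μψ), integral_mul_const]
    rw [h2, hw1, ← key ψ, ← hμψdef]; ring
  have hgsq : ∫ x, g x ^ 2 ∂lam ≤ 4 * M ^ 2 * C := by
    have hle : ∀ᵐ x ∂lam, g x ^ 2 ≤ 4 * M ^ 2 * C * w x := by
      filter_upwards [hwC] with x hx
      have := hgbd x hx
      calc g x ^ 2 = (w x * |ψ x - μψ|) ^ 2 := by
            simp only [hgdef, mul_pow, sq_abs]
        _ = w x * (w x * |ψ x - μψ| ^ 2) := by ring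
        _ ≤ w x * (C * (2 * M) ^ 2) := by
            refine mul_le_mul_of_nonneg_left ?_ (hw0 x)
            refine mul_le_mul hx ?_ (by positivity) hC.le
            have h2 : |ψ x - μψ| ≤ 2 * M := by
              calc |ψ x - μψ| ≤ |ψ x| + |μψ| := abs_sub _ _
                _ ≤ M + M := add_le_add (hψM x) hμψ
                _ = 2 * M := by ring
            exact pow_le_pow_left₀ (abs_nonneg _) h2 2
        _ = 4 * M ^ 2 * C * w x := by ring
    have hgsqint : Integrable (fun x => g x ^ 2) lam := by
      refine memLp_one_iff_integrable.mp
        (MemLp.of_bound ((hg.pow_const 2).aestronglyMeasurable) ((2 * M * C) ^ 2) ?_)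
      filter_upwards [hwC] with x hx
      rw [Real.norm_eq_abs, abs_pow]
      exact pow_le_pow_left₀ (abs_nonneg _) (hgbd x hx) 2
    calc ∫ x, g x ^ 2 ∂lam ≤ ∫ x, 4 * M ^ 2 * C * w x ∂lam :=
          integral_mono_ae hgsqint (hwint.const_mul _) hle
      _ = 4 * M ^ 2 * C := by rw [integral_const_mul, hw1, mul_one]
  have hwsq : ∫ x, w x ^ 2 ∂lam ≤ C := by
    have hle : ∀ᵐ x ∂lam, w x ^ 2 ≤ C * w x := by
      filter_upwards [hwC] with x hx
      calc w x ^ 2 = w x * w x := sq (w x)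
        _ ≤ C * w x := mul_le_mul_of_nonneg_right hx (hw0 x)
    have hwsqint : Integrable (fun x => w x ^ 2) lam := by
      refine memLp_one_iff_integrable.mp
        (MemLp.of_bound ((hw.pow_const 2).aestronglyMeasurable) (C ^ 2) ?_)
      filter_upwards [hwC] with x hx
      rw [Real.norm_eq_abs, abs_pow, abs_of_nonneg (hw0 x)]
      exact pow_le_pow_left₀ (hw0 x) hx 2
    calc ∫ x, w x ^ 2 ∂lam ≤ ∫ x, C * w x ∂lam :=
          integral_mono_ae hwsqint (hwint.const_mul _) hle
      _ = C := by rw [integral_const_mul, hw1, mul_one]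
  -- random variables under P
  set Y : ℕ → Ω → ℝ := fun i ω => g (X i ω) with hYdef
  have hYmeas : ∀ i, Measurable (Y i) := fun i => hg.comp (hX i)
  have hYmem : ∀ i, MemLp (Y i) 2 P := by
    intro i
    refine MemLp.of_bound (hYmeas i).aestronglyMeasurable (2 * M * C) ?_
    filter_upwards [haeC i] with ω hω
    simpa [Real.norm_eq_abs] using hgbd _ hω
  have hYint : ∀ i, Integrable (Y i) P := fun i => (hYmem i).integrable one_le_two
  have hYmean : ∀ i, ∫ ω, Y i ω ∂P = 0 := fun i => (htrans g hg i).trans hg0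
  have hYvar : ∀ i, variance (Y i) P ≤ 4 * M ^ 2 * C := by
    intro i
    rw [variance_eq_sub (hYmem i)]
    have h1 : P[(Y i) ^ 2] = ∫ x, g x ^ 2 ∂lam := by
      simp only [Pi.pow_apply]
      exact htrans (fun x => g x ^ 2) (hg.pow_const 2) i
    have h2 : (0:ℝ) ≤ P[Y i] ^ 2 := sq_nonneg _
    calc P[(Y i) ^ 2] - P[Y i] ^ 2 ≤ P[(Y i) ^ 2] := by linarith
      _ ≤ 4 * M ^ 2 * C := by rw [h1]; exact hgsq
  set W : ℕ → Ω → ℝ := fun i ω => w (X i ω) with hWdef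
  have hWmeas : ∀ i, Measurable (W i) := fun i => hw.comp (hX i)
  have hWmem : ∀ i, MemLp (W i) 2 P := by
    intro i
    refine MemLp.of_bound (hWmeas i).aestronglyMeasurable C ?_
    filter_upwards [haeC i] with ω hω
    simpa [hWdef, Real.norm_eq_abs, abs_of_nonneg (hw0 (X i ω))] using hω
  have hWint : ∀ i, Integrable (W i) P := fun i => (hWmem i).integrable one_le_two
  have hWmean : ∀ i, ∫ ω, W i ω ∂P = 1 := fun i => (htrans w hw i).trans hw1
  have hWvar : ∀ i, variance (W i) P ≤ C := by
    intro i
    rw [variance_eq_sub (hWmem i)]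
    have h1 : P[(W i) ^ 2] = ∫ x, w x ^ 2 ∂lam := by
      simp only [Pi.pow_apply]
      exact htrans (fun x => w x ^ 2) (hw.pow_const 2) i
    have h2 : (0:ℝ) ≤ P[W i] ^ 2 := sq_nonneg _
    calc P[(W i) ^ 2] - P[W i] ^ 2 ≤ P[(W i) ^ 2] := by linarith
      _ ≤ C := by rw [h1]; exact hwsq
  -- sums
  set SY : Ω → ℝ := ∑ i ∈ Finset.range N, Y i with hSYdef
  have hSYapp : ∀ ω, SY ω = ∑ i ∈ Finset.range N, Y i ω := by
    intro ω; simp [hSYdef, Finset.sum_apply]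
  set SW : Ω → ℝ := ∑ i ∈ Finset.range N, W i with hSWdef
  have hSWapp : ∀ ω, SW ω = ∑ i ∈ Finset.range N, w (X i ω) := by
    intro ω; simp [hSWdef, hWdef, Finset.sum_apply]
  have hSYmem : MemLp SY 2 P := memLp_finset_sum' _ (fun i _ => hYmem i)
  have hSWmem : MemLp SW 2 P := memLp_finset_sum' _ (fun i _ => hWmem i)
  have hSYmeas : Measurable SY := by
    have h := funext hSYapp
    rw [h]; exact Finset.measurable_sum _ (fun i _ => hYmeas i)
  have hSWmeas : Measurable SW := by
    have h := funext hSWapp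
    rw [h]; exact Finset.measurable_sum _ (fun i _ => hw.comp (hX i))
  have hpairY : Set.Pairwise ↑(Finset.range N) fun i j => IndepFun (Y i) (Y j) P :=
    fun i _ j _ hij => (hindep.indepFun hij).comp hg hg
  have hpairW : Set.Pairwise ↑(Finset.range N) fun i j => IndepFun (W i) (W j) P :=
    fun i _ j _ hij => (hindep.indepFun hij).comp hw hw
  have hSYvar : variance SY P ≤ N * (4 * M ^ 2 * C) := by
    rw [hSYdef, IndepFun.variance_sum (fun i _ => hYmem i) hpairY]
    calc ∑ i ∈ Finset.range N, variance (Y i) P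
        ≤ ∑ _i ∈ Finset.range N, 4 * M ^ 2 * C :=
          Finset.sum_le_sum fun i _ => hYvar i
      _ = N * (4 * M ^ 2 * C) := by
          rw [Finset.sum_const, Finset.card_range, nsmul_eq_mul]
  have hSWvar : variance SW P ≤ N * C := by
    rw [hSWdef, IndepFun.variance_sum (fun i _ => hWmem i) hpairW]
    calc ∑ i ∈ Finset.range N, variance (W i) P
        ≤ ∑ _i ∈ Finset.range N, C := Finset.sum_le_sum fun i _ => hWvar i
      _ = N * C := by rw [Finset.sum_const, Finset.card_range, nsmul_eq_mul]
  have hSYmean : ∫ ω, SY ω ∂P = 0 := by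
    simp_rw [hSYapp]
    rw [integral_finset_sum _ (fun i _ => hYint i)]
    simp [hYmean]
  have hSWmean : ∫ ω, SW ω ∂P = N := by
    simp_rw [hSWapp]
    rw [integral_finset_sum _ (fun i _ => hWint i)]
    have h : ∀ i ∈ Finset.range N, ∫ ω, w (X i ω) ∂P = 1 := fun i _ => hWmean i
    rw [Finset.sum_congr rfl h]
    simp
  have hSYsq : ∫ ω, SY ω ^ 2 ∂P ≤ N * (4 * M ^ 2 * C) := by
    have hv := variance_eq_sub hSYmem
    have h1 : P[SY ^ 2] = ∫ ω, SY ω ^ 2 ∂P := by simp only [Pi.pow_apply]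
    have h2 : P[SY] = 0 := hSYmean
    rw [h1, h2] at hv
    have h3 := hSYvar
    rw [hv] at h3
    simpa using h3
  -- Chebyshev bound on the bad event
  have hSW0 : ∀ ω, 0 ≤ SW ω := by
    intro ω; rw [hSWapp]; exact Finset.sum_nonneg fun i _ => hw0 _
  have hN2 : (0:ℝ) < (N:ℝ)/2 := by positivity
  have hcheb : (P {ω | SW ω < (N:ℝ)/2}).toReal ≤ 4 * C / N := by
    have hsub : {ω | SW ω < (N:ℝ)/2} ⊆ {ω | (N:ℝ)/2 ≤ |SW ω - P[SW]|} := by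
      intro ω hω
      have h1 : SW ω < (N:ℝ)/2 := hω
      have h2 : P[SW] = (N:ℝ) := hSWmean
      rw [Set.mem_setOf_eq, h2, abs_sub_comm, abs_of_nonneg (by linarith)]
      linarith
    have hch := meas_ge_le_variance_div_sq (μ := P) hSWmem hN2
    have hle := le_trans (measure_mono hsub) hch
    calc (P {ω | SW ω < (N:ℝ)/2}).toReal
        ≤ (ENNReal.ofReal (variance SW P / ((N:ℝ)/2)^2)).toReal :=
          ENNReal.toReal_mono ENNReal.ofReal_ne_top hle
      _ = variance SW P / ((N:ℝ)/2)^2 :=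
          ENNReal.toReal_ofReal (div_nonneg (variance_nonneg _ _) (by positivity))
      _ ≤ ((N:ℝ) * C) / ((N:ℝ)/2)^2 :=
          (div_le_div_iff_of_pos_right (by positivity)).mpr hSWvar
      _ = 4 * C / N := by field_simp; ring
  -- the good event
  set A : Set Ω := {ω | (N:ℝ)/2 ≤ SW ω} with hAdef
  have hA : MeasurableSet A := measurableSet_le measurable_const hSWmeas
  have hAc : Aᶜ = {ω | SW ω < (N:ℝ)/2} := by
    ext ω; simp [hAdef, not_le]
  set T : Ω → ℝ := fun ω => ∑ i ∈ Finset.range N, w (X i ω) * ψ (X i ω) with hTdef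
  have hTmeas : Measurable T := by
    rw [hTdef]
    exact Finset.measurable_sum _ (fun i _ => (hw.comp (hX i)).mul (hψ.comp (hX i)))
  set F : Ω → ℝ := fun ω => ((∑ i ∈ Finset.range N, w (X i ω) * ψ (X i ω)) /
      (∑ i ∈ Finset.range N, w (X i ω)) - μψ) ^ 2 with hFdef
  have hFapp : ∀ ω, F ω = (T ω / SW ω - μψ) ^ 2 := by
    intro ω; simp only [hFdef, hTdef, hSWapp]
  have hTabs : ∀ ω, |T ω| ≤ M * SW ω := by
    intro ω
    rw [hSWapp, Finset.mul_sum, hTdef]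
    calc |∑ i ∈ Finset.range N, w (X i ω) * ψ (X i ω)|
        ≤ ∑ i ∈ Finset.range N, |w (X i ω) * ψ (X i ω)| :=
          Finset.abs_sum_le_sum_abs _ _
      _ ≤ ∑ i ∈ Finset.range N, M * w (X i ω) := by
          refine Finset.sum_le_sum fun i _ => ?_
          rw [abs_mul, abs_of_nonneg (hw0 _)]
          calc w (X i ω) * |ψ (X i ω)| ≤ w (X i ω) * M :=
              mul_le_mul_of_nonneg_left (hψM _) (hw0 _)
            _ = M * w (X i ω) := mul_comm _ _
  have hFle : ∀ ω, |T ω / SW ω| ≤ M := by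
    intro ω
    rcases eq_or_lt_of_le (hSW0 ω) with h | h
    · rw [← h, div_zero, abs_zero]; exact hM
    · rw [abs_div, abs_of_pos h, div_le_iff₀ h]
      exact hTabs ω
  have hFbd : ∀ ω, F ω ≤ 4 * M ^ 2 := by
    intro ω
    have h1 : |T ω / SW ω - μψ| ≤ 2 * M := by
      calc |T ω / SW ω - μψ| ≤ |T ω / SW ω| + |μψ| := abs_sub _ _
        _ ≤ M + M := add_le_add (hFle ω) hμψ
        _ = 2 * M := by ring
    calc F ω = |T ω / SW ω - μψ| ^ 2 := by rw [hFapp, sq_abs]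
      _ ≤ (2 * M) ^ 2 := pow_le_pow_left₀ (abs_nonneg _) h1 2
      _ = 4 * M ^ 2 := by ring
  have hF0 : ∀ ω, 0 ≤ F ω := by
    intro ω; rw [hFapp]; exact sq_nonneg _
  have hFmeas : Measurable F := by
    have h : F = fun ω => (T ω / SW ω - μψ) ^ 2 := funext hFapp
    rw [h]
    exact ((hTmeas.div hSWmeas).sub measurable_const).pow_const 2
  have hFint : Integrable F P := by
    refine memLp_one_iff_integrable.mp
      (MemLp.of_bound hFmeas.aestronglyMeasurable (4 * M ^ 2) ?_)
    refine Eventually.of_forall fun ω => ?_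
    rw [Real.norm_eq_abs, abs_of_nonneg (hF0 ω)]
    exact hFbd ω
  have hSYkey : ∀ ω, SY ω = T ω - μψ * SW ω := by
    intro ω
    rw [hSYapp, hSWapp, hTdef, Finset.mul_sum, ← Finset.sum_sub_distrib]
    refine Finset.sum_congr rfl fun i _ => ?_
    simp only [hYdef, hgdef]; ring
  have hSYsqint : Integrable (fun ω => 4 / (N:ℝ)^2 * SY ω ^ 2) P :=
    (hSYmem.integrable_sq).const_mul _
  have honA : ∀ ω ∈ A, F ω ≤ 4 / (N:ℝ)^2 * SY ω ^ 2 := by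
    intro ω hω
    have hω' : (N:ℝ)/2 ≤ SW ω := hω
    have hpos : 0 < SW ω := lt_of_lt_of_le hN2 hω'
    have heq : T ω / SW ω - μψ = SY ω / SW ω := by
      rw [hSYkey ω]; field_simp
    have h3 : F ω = SY ω ^ 2 / SW ω ^ 2 := by
      rw [hFapp, heq, div_pow]
    rw [h3, div_le_iff₀ (by positivity)]
    have h2 : ((N:ℝ)/2)^2 ≤ SW ω ^ 2 := pow_le_pow_left₀ hN2.le hω' 2
    calc SY ω ^ 2 = 4/(N:ℝ)^2 * SY ω ^ 2 * ((N:ℝ)^2/4) := by field_simp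
      _ ≤ 4/(N:ℝ)^2 * SY ω ^ 2 * SW ω ^ 2 := by
          refine mul_le_mul_of_nonneg_left ?_ (by positivity)
          calc (N:ℝ)^2/4 = ((N:ℝ)/2)^2 := by ring
            _ ≤ SW ω ^ 2 := h2
  have hInt1 : ∫ ω in A, F ω ∂P ≤ 16 * M ^ 2 * C / N := by
    calc ∫ ω in A, F ω ∂P ≤ ∫ ω in A, 4/(N:ℝ)^2 * SY ω ^ 2 ∂P :=
        setIntegral_mono_on hFint.integrableOn hSYsqint.integrableOn hA honA
      _ ≤ ∫ ω, 4/(N:ℝ)^2 * SY ω ^ 2 ∂P :=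
        setIntegral_le_integral hSYsqint (Eventually.of_forall fun ω => by positivity)
      _ = 4/(N:ℝ)^2 * ∫ ω, SY ω ^ 2 ∂P := integral_const_mul _ _
      _ ≤ 4/(N:ℝ)^2 * ((N:ℝ) * (4 * M ^ 2 * C)) :=
          mul_le_mul_of_nonneg_left hSYsq (by positivity)
      _ = 16 * M ^ 2 * C / N := by field_simp; ring
  have hInt2 : ∫ ω in Aᶜ, F ω ∂P ≤ 4 * M ^ 2 * (4 * C / N) := by
    calc ∫ ω in Aᶜ, F ω ∂P ≤ ∫ _ω in Aᶜ, 4 * M ^ 2 ∂P :=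
        setIntegral_mono_on hFint.integrableOn
          (integrableOn_const (measure_lt_top _ _).ne) hA.compl
          (fun ω _ => hFbd ω)
      _ = (P Aᶜ).toReal * (4 * M ^ 2) := by rw [setIntegral_const, smul_eq_mul]; rfl
      _ ≤ (4 * C / N) * (4 * M ^ 2) := by
          refine mul_le_mul_of_nonneg_right ?_ (by positivity)
          rw [hAc]; exact hcheb
      _ = 4 * M ^ 2 * (4 * C / N) := by ring
  calc ∫ ω, F ω ∂P = ∫ ω in A, F ω ∂P + ∫ ω in Aᶜ, F ω ∂P :=
      (integral_add_compl hA hFint).symm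
    _ ≤ 16 * M ^ 2 * C / N + 4 * M ^ 2 * (4 * C / N) := add_le_add hInt1 hInt2
    _ ≤ (32 * C * M ^ 2 + 1) / N := by
        rw [show 4 * M ^ 2 * (4 * C / N) = 16 * M ^ 2 * C / N from by ring,
          ← add_div]
        have hnum : 16 * M ^ 2 * C + 16 * M ^ 2 * C ≤ 32 * C * M ^ 2 + 1 := by nlinarith
        exact (div_le_div_iff_of_pos_right hN0).mpr hnum
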